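/- The spaces E_k(0) do not depend on the choice of defining function for M': let H : M → M' be a CR map of class C^k, let a be a real-analytic map from a neighborhood of 0 in ℂ^{N'} into the invertible d'×d' real matrices, and set ρ̃ = a·ρ' (so ρ̃ is again a real-analytic defining function for M' near 0). Then the space Ẽ_k(0) defined from ρ̃ and H by Ẽ_k(0) = span_ℂ{(Λ^α(ρ̃_{lZ'}∘(H,H̄)))(0) : |α| ≤ k, 1 ≤ l ≤ d'} equals E_k(0) defined from ρ' and H. -/

import Mathlib

open Complex Topology Filter

noncomputable section

/-- The local model for the generic submanifold `M`: a neighborhood of `0` in `ℂⁿ × ℝᵈ`. -/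
abbrev Dom (n d : ℕ) : Type := (Fin n → ℂ) × (Fin d → ℝ)

/-- The ambient space `ℂᴺ = ℂⁿ × ℂᵈ`. -/
abbrev Amb (n d : ℕ) : Type := (Fin n → ℂ) × (Fin d → ℂ)

/-- The Wirtinger derivative `∂/∂z̄ⱼ` of a function on `ℂⁿ × ℝᵈ`. -/
def dzbar {n d : ℕ} (j : Fin n) (f : Dom n d → ℂ) (p : Dom n d) : ℂ :=
  (1 / 2 : ℂ) * (fderiv ℝ f p (Pi.single j 1, 0) +
    Complex.I * fderiv ℝ f p (Pi.single j Complex.I, 0))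

/-- The derivative `∂/∂sₖ` of a function on `ℂⁿ × ℝᵈ`. -/
def dS {n d : ℕ} (k : Fin d) (f : Dom n d → ℂ) (p : Dom n d) : ℂ :=
  fderiv ℝ f p (0, Pi.single k 1)

/-- The matrix `I_d + i φ_s`. -/
def phiMat {n d : ℕ} (φ : Dom n d → Fin d → ℝ) (p : Dom n d) :
    Matrix (Fin d) (Fin d) ℂ := fun k l =>
  (if k = l then 1 else 0) + Complex.I * ((fderiv ℝ φ p (0, Pi.single l 1)) k : ℂ)

/-- The CR vector field `Λⱼ = ∂/∂z̄ⱼ − i (φ_{z̄ⱼ})ᵀ (I_d + iφ_s)⁻¹ ∂/∂s` of `M`. -/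
def Lambda {n d : ℕ} (φ : Dom n d → Fin d → ℝ) (j : Fin n) (f : Dom n d → ℂ)
    (p : Dom n d) : ℂ :=
  dzbar j f p - Complex.I *
    ∑ l, (∑ k, dzbar j (fun q => ((φ q k : ℝ) : ℂ)) p * (phiMat φ p)⁻¹ k l) * dS l f p

/-- `Λ^α = Λ₁^{α₁} ⋯ Λₙ^{αₙ}`. -/
def LambdaPow {n d : ℕ} (φ : Dom n d → Fin d → ℝ) (α : Fin n → ℕ)
    (f : Dom n d → ℂ) : Dom n d → ℂ :=
  (((List.finRange n).map fun j => (Lambda φ j)^[α j]).foldr (· ∘ ·) id) f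

/-- The Wirtinger (complex) gradient component `∂r/∂Z'ₘ` of a real-valued function on `ℂ^{N'}`. -/
def gradZ {N' : ℕ} (m : Fin N') (r : (Fin N' → ℂ) → ℝ) (Z : Fin N' → ℂ) : ℂ :=
  (1 / 2 : ℂ) * ((fderiv ℝ r Z (Pi.single m 1) : ℂ) -
    Complex.I * (fderiv ℝ r Z (Pi.single m Complex.I) : ℂ))

/-- The space `E_k(0)` spanned by the vectors `Λ^α (ρ'_{l Z'}(H, H̄))(0)`, `|α| ≤ k`. -/
def Ek {n d N' d' : ℕ} (φ : Dom n d → Fin d → ℝ) (ρ : Fin d' → (Fin N' → ℂ) → ℝ)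
    (H : Dom n d → Fin N' → ℂ) (k : ℕ) : Submodule ℂ (Fin N' → ℂ) :=
  Submodule.span ℂ { v | ∃ (α : Fin n → ℕ) (l : Fin d'), (∑ j, α j) ≤ k ∧
    v = fun m => LambdaPow φ α (fun p => gradZ m (ρ l) (H p)) 0 }

/-- The identification `ι(z,s) = (z, s + iφ(z,z̄,s))` of `ℂⁿ × ℝᵈ` with `M ⊆ ℂᴺ`. -/
def iotaM {n d : ℕ} (φ : Dom n d → Fin d → ℝ) (p : Dom n d) : Amb n d :=
  (p.1, fun k => (p.2 k : ℂ) + Complex.I * ((φ p k : ℝ) : ℂ))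

/-- The map `Ψ(z,s,t) = (z, s + it + iφ̂(z,z̄,s+it))`. -/
def PsiW {n d : ℕ} (φhat : Amb n d → Fin d → ℂ)
    (q : (Fin n → ℂ) × (Fin d → ℝ) × (Fin d → ℝ)) : Amb n d :=
  (q.1, fun k => (q.2.1 k : ℂ) + Complex.I * (q.2.2 k : ℂ) +
    Complex.I * φhat (q.1, fun k' => (q.2.1 k' : ℂ) + Complex.I * (q.2.2 k' : ℂ)) k)

/-- The wedge `W_Γ^ε` in the coordinates `(z,s,t)`. -/
def WedgeSet {n d : ℕ} (Γ : Set (Fin d → ℝ)) (ε : ℝ) :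
    Set ((Fin n → ℂ) × (Fin d → ℝ) × (Fin d → ℝ)) :=
  {q | ‖q.1‖ < ε ∧ ‖q.2.1‖ < ε ∧ ‖q.2.2‖ < ε ∧ q.2.2 ∈ Γ}

/-- `h` extends continuously to a holomorphic function in the wedge `W_Γ`. -/
def ExtendsToWedge {n d : ℕ} (φ : Dom n d → Fin d → ℝ) (φhat : Amb n d → Fin d → ℂ)
    (Γ : Set (Fin d → ℝ)) (h : Dom n d → ℂ) : Prop :=
  ∃ ε > (0 : ℝ), ∃ F : Amb n d → ℂ,
    DifferentiableOn ℂ F (PsiW φhat '' WedgeSet Γ ε) ∧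
    ContinuousOn F (PsiW φhat '' WedgeSet Γ ε ∪
      iotaM φ '' {p : Dom n d | ‖p.1‖ < ε ∧ ‖p.2‖ < ε}) ∧
    ∀ p : Dom n d, ‖p.1‖ < ε → ‖p.2‖ < ε → F (iotaM φ p) = h p

namespace CRproof

variable {n d : ℕ} (φ : Dom n d → Fin d → ℝ)

/-- coefficient of `∂/∂s_l` in `Λ_j`. -/
def Acoef (j : Fin n) (l : Fin d) (p : Dom n d) : ℂ :=
  ∑ k, dzbar j (fun q => ((φ q k : ℝ) : ℂ)) p * (phiMat φ p)⁻¹ k l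

lemma lambda_eq (j : Fin n) (f : Dom n d → ℂ) (p : Dom n d) :
    Lambda φ j f p = dzbar j f p - Complex.I * ∑ l, Acoef φ j l p * dS l f p := rfl

variable {φ}

section pointwise

variable {f g : Dom n d → ℂ} {p : Dom n d}

lemma dzbar_add (j : Fin n) (hf : DifferentiableAt ℝ f p) (hg : DifferentiableAt ℝ g p) :
    dzbar j (fun q => f q + g q) p = dzbar j f p + dzbar j g p := by
  simp only [dzbar, fderiv_fun_add hf hg, ContinuousLinearMap.add_apply]; ring

lemma dS_add (l : Fin d) (hf : DifferentiableAt ℝ f p) (hg : DifferentiableAt ℝ g p) :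
    dS l (fun q => f q + g q) p = dS l f p + dS l g p := by
  simp only [dS, fderiv_fun_add hf hg, ContinuousLinearMap.add_apply]

lemma lambda_add (j : Fin n) (hf : DifferentiableAt ℝ f p) (hg : DifferentiableAt ℝ g p) :
    Lambda φ j (fun q => f q + g q) p = Lambda φ j f p + Lambda φ j g p := by
  simp only [lambda_eq, dzbar_add j hf hg, dS_add _ hf hg, mul_add, Finset.sum_add_distrib]
  ring

lemma dzbar_mul (j : Fin n) (hf : DifferentiableAt ℝ f p) (hg : DifferentiableAt ℝ g p) :
    dzbar j (fun q => f q * g q) p = f p * dzbar j g p + g p * dzbar j f p := by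
  simp only [dzbar, fderiv_fun_mul hf hg, ContinuousLinearMap.add_apply,
    ContinuousLinearMap.smul_apply, smul_eq_mul]; ring

lemma dS_mul (l : Fin d) (hf : DifferentiableAt ℝ f p) (hg : DifferentiableAt ℝ g p) :
    dS l (fun q => f q * g q) p = f p * dS l g p + g p * dS l f p := by
  simp only [dS, fderiv_fun_mul hf hg, ContinuousLinearMap.add_apply,
    ContinuousLinearMap.smul_apply, smul_eq_mul]

lemma lambda_mul (j : Fin n) (hf : DifferentiableAt ℝ f p) (hg : DifferentiableAt ℝ g p) :
    Lambda φ j (fun q => f q * g q) p = f p * Lambda φ j g p + g p * Lambda φ j f p := by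
  rw [lambda_eq, lambda_eq, lambda_eq, dzbar_mul j hf hg]
  have h : ∀ l ∈ Finset.univ, Acoef φ j l p * dS l (fun q => f q * g q) p
      = f p * (Acoef φ j l p * dS l g p) + g p * (Acoef φ j l p * dS l f p) :=
    fun l _ => by rw [dS_mul _ hf hg]; ring
  rw [Finset.sum_congr rfl h, Finset.sum_add_distrib, ← Finset.mul_sum, ← Finset.mul_sum]
  ring

lemma dzbar_congr (j : Fin n) (h : f =ᶠ[𝓝 p] g) : dzbar j f p = dzbar j g p := by
  simp only [dzbar, h.fderiv_eq]

lemma dS_congr (l : Fin d) (h : f =ᶠ[𝓝 p] g) : dS l f p = dS l g p := by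
  simp only [dS, h.fderiv_eq]

lemma lambda_congr (j : Fin n) (h : f =ᶠ[𝓝 p] g) : Lambda φ j f p = Lambda φ j g p := by
  simp only [lambda_eq, dzbar_congr j h, dS_congr _ h]

end pointwise

section smoothness

lemma contDiffOn_fderiv_apply {E F : Type*} [NormedAddCommGroup E] [NormedSpace ℝ E]
    [NormedAddCommGroup F] [NormedSpace ℝ F] {f : E → F} {V : Set E} {m : ℕ}
    (hf : ContDiffOn ℝ (m + 1 : ℕ) f V) (hV : IsOpen V) (v : E) :
    ContDiffOn ℝ m (fun p => fderiv ℝ f p v) V := by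
  have h1 : ContDiffOn ℝ m (fderiv ℝ f) V :=
    hf.fderiv_of_isOpen hV (by exact_mod_cast le_refl (m + 1 : ℕ))
  exact h1.clm_apply contDiffOn_const

lemma dzbar_smooth {V : Set (Dom n d)} (hV : IsOpen V) {m : ℕ} {f : Dom n d → ℂ}
    (hf : ContDiffOn ℝ (m + 1 : ℕ) f V) (j : Fin n) :
    ContDiffOn ℝ m (dzbar j f) V := by
  have h1 := contDiffOn_fderiv_apply hf hV (Pi.single j 1, 0)
  have h2 := contDiffOn_fderiv_apply hf hV (Pi.single j Complex.I, 0)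
  exact contDiffOn_const.mul (h1.add (contDiffOn_const.mul h2))

lemma dS_smooth {V : Set (Dom n d)} (hV : IsOpen V) {m : ℕ} {f : Dom n d → ℂ}
    (hf : ContDiffOn ℝ (m + 1 : ℕ) f V) (l : Fin d) :
    ContDiffOn ℝ m (dS l f) V :=
  contDiffOn_fderiv_apply hf hV (0, Pi.single l 1)

/-- the local-smoothness-near-`0` predicate -/
def Csm (m : ℕ) (f : Dom n d → ℂ) : Prop :=
  ∃ V : Set (Dom n d), IsOpen V ∧ (0 : Dom n d) ∈ V ∧ ContDiffOn ℝ m f V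

lemma Csm.mono {m m' : ℕ} {f : Dom n d → ℂ} (h : m' ≤ m) (hf : Csm m f) : Csm m' f := by
  obtain ⟨V, hVo, h0, hC⟩ := hf
  exact ⟨V, hVo, h0, hC.of_le (by exact_mod_cast h)⟩

lemma Csm.add {m : ℕ} {f g : Dom n d → ℂ} (hf : Csm m f) (hg : Csm m g) :
    Csm m (fun p => f p + g p) := by
  obtain ⟨V, hVo, h0, hC⟩ := hf
  obtain ⟨W, hWo, h0W, hCW⟩ := hg
  exact ⟨V ∩ W, hVo.inter hWo, ⟨h0, h0W⟩,
    (hC.mono Set.inter_subset_left).add (hCW.mono Set.inter_subset_right)⟩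

lemma Csm.mul {m : ℕ} {f g : Dom n d → ℂ} (hf : Csm m f) (hg : Csm m g) :
    Csm m (fun p => f p * g p) := by
  obtain ⟨V, hVo, h0, hC⟩ := hf
  obtain ⟨W, hWo, h0W, hCW⟩ := hg
  exact ⟨V ∩ W, hVo.inter hWo, ⟨h0, h0W⟩,
    (hC.mono Set.inter_subset_left).mul (hCW.mono Set.inter_subset_right)⟩

lemma Csm.zero {m : ℕ} : Csm (n := n) (d := d) m (fun _ => 0) :=
  ⟨Set.univ, isOpen_univ, trivial, contDiffOn_const⟩

lemma Csm.sum {m : ℕ} {ι : Type*} {t : Finset ι} {F : ι → Dom n d → ℂ}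
    (hF : ∀ i ∈ t, Csm m (F i)) : Csm m (fun p => ∑ i ∈ t, F i p) := by
  classical
  induction t using Finset.induction with
  | empty => simpa using Csm.zero
  | insert a s hnotmem ih =>
    simp only [Finset.sum_insert hnotmem]
    exact (hF a (Finset.mem_insert_self a s)).add
      (ih fun i hi => hF i (Finset.mem_insert_of_mem hi))

lemma Csm.eventually_diff {m : ℕ} {f : Dom n d → ℂ} (hf : Csm m f) (hm : 1 ≤ m) :
    ∀ᶠ p in 𝓝 (0 : Dom n d), DifferentiableAt ℝ f p := by
  obtain ⟨V, hVo, h0, hC⟩ := hf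
  filter_upwards [hVo.mem_nhds h0] with p hp
  exact ((hC.differentiableOn (by exact_mod_cast (show m ≠ 0 by omega))).differentiableAt (hVo.mem_nhds hp))

variable {V₀ : Set (Dom n d)}

lemma Csm.lambda (hV₀ : IsOpen V₀) (h0V₀ : (0 : Dom n d) ∈ V₀)
    (hA : ∀ j l, ContDiffOn ℝ (⊤ : ℕ∞) (Acoef φ j l) V₀)
    {m : ℕ} {f : Dom n d → ℂ} (hf : Csm (m + 1) f) (j : Fin n) :
    Csm m (Lambda φ j f) := by
  obtain ⟨V, hVo, h0, hC⟩ := hf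
  refine ⟨V ∩ V₀, hVo.inter hV₀, ⟨h0, h0V₀⟩, ?_⟩
  have hdz : ContDiffOn ℝ m (dzbar j f) V := dzbar_smooth hVo hC j
  have hds : ∀ l, ContDiffOn ℝ m (dS l f) V := fun l => dS_smooth hVo hC l
  have : Lambda φ j f = fun p => dzbar j f p - Complex.I * ∑ l, Acoef φ j l p * dS l f p :=
    funext fun p => lambda_eq φ j f p
  rw [this]
  refine (hdz.mono Set.inter_subset_left).sub (contDiffOn_const.mul (ContDiffOn.sum fun l _ => ?_))
  exact (((hA j l).of_le ((by exact_mod_cast le_top : (m : WithTop ℕ∞) ≤ ((⊤:ℕ∞) : WithTop ℕ∞)))).mono Set.inter_subset_right).mul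
    ((hds l).mono Set.inter_subset_left)

end smoothness


section words

variable (φ)

/-- iterated application of `Lambda` along a word -/
def LW (w : List (Fin n)) (f : Dom n d → ℂ) : Dom n d → ℂ := w.foldr (Lambda φ) f

@[simp] lemma LW_nil (f : Dom n d → ℂ) : LW φ [] f = f := rfl

@[simp] lemma LW_cons (j : Fin n) (w : List (Fin n)) (f : Dom n d → ℂ) :
    LW φ (j :: w) f = Lambda φ j (LW φ w f) := rfl

lemma LW_append (w₁ w₂ : List (Fin n)) (f : Dom n d → ℂ) :
    LW φ (w₁ ++ w₂) f = LW φ w₁ (LW φ w₂ f) := List.foldr_append ..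

lemma lambda_zero (j : Fin n) : Lambda φ j (fun _ => (0:ℂ)) = fun _ => (0:ℂ) := by
  funext p
  simp [lambda_eq, dzbar, dS, fderiv_const]

variable {φ}

variable {V₀ : Set (Dom n d)}

lemma Csm.lw (hV₀ : IsOpen V₀) (h0V₀ : (0 : Dom n d) ∈ V₀)
    (hA : ∀ j l, ContDiffOn ℝ (⊤ : ℕ∞) (Acoef φ j l) V₀)
    {m : ℕ} {f : Dom n d → ℂ} (hf : Csm m f) :
    ∀ w : List (Fin n), w.length ≤ m → Csm (m - w.length) (LW φ w f)
  | [], _ => by simpa using hf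
  | j :: t, hw => by
    have ht : t.length ≤ m := le_trans (by simp) hw
    have h1 : Csm (m - t.length) (LW φ t f) := Csm.lw hV₀ h0V₀ hA hf t ht
    have h2 : m - t.length = (m - (j :: t).length) + 1 := by simp at hw ⊢; omega
    rw [h2] at h1
    exact h1.lambda hV₀ h0V₀ hA j

lemma Csm.list_sum {ι : Type*} {m : ℕ} (L : List ι) (F : ι → Dom n d → ℂ)
    (hF : ∀ i ∈ L, Csm m (F i)) : Csm m (fun p => (L.map (fun i => F i p)).sum) := by
  induction L with
  | nil => simpa using Csm.zero
  | cons a t ih =>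
    simp only [List.map_cons, List.sum_cons]
    exact (hF a (by simp)).add (ih fun i hi => hF i (by simp [hi]))

lemma EventuallyEq.lambda {f g : Dom n d → ℂ} (h : f =ᶠ[𝓝 (0 : Dom n d)] g) (j : Fin n) :
    Lambda φ j f =ᶠ[𝓝 (0 : Dom n d)] Lambda φ j g := by
  have h' : ∀ᶠ p in 𝓝 (0 : Dom n d), f =ᶠ[𝓝 p] g := eventually_eventually_nhds.2 h
  filter_upwards [h'] with p hp using lambda_congr j hp

lemma EventuallyEq.lw {f g : Dom n d → ℂ} (h : f =ᶠ[𝓝 (0 : Dom n d)] g) (w : List (Fin n)) :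
    LW φ w f =ᶠ[𝓝 (0 : Dom n d)] LW φ w g := by
  induction w with
  | nil => simpa using h
  | cons j t ih => exact EventuallyEq.lambda ih j

lemma lambda_list_sum {ι : Type*} (L : List ι) (F : ι → Dom n d → ℂ)
    (hF : ∀ i ∈ L, Csm 1 (F i)) (j : Fin n) :
    Lambda φ j (fun p => (L.map (fun i => F i p)).sum) =ᶠ[𝓝 (0 : Dom n d)]
      fun p => (L.map (fun i => Lambda φ j (F i) p)).sum := by
  induction L with
  | nil => simp only [List.map_nil, List.sum_nil]; rw [lambda_zero]
  | cons a t ih =>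
    have hFa : Csm 1 (F a) := hF a (by simp)
    have hFt : ∀ i ∈ t, Csm 1 (F i) := fun i hi => hF i (by simp [hi])
    have hCt : Csm 1 (fun p => (t.map (fun i => F i p)).sum) := Csm.list_sum t F hFt
    have key : Lambda φ j (fun p => F a p + (t.map (fun i => F i p)).sum) =ᶠ[𝓝 (0 : Dom n d)]
        fun p => Lambda φ j (F a) p + Lambda φ j (fun q => (t.map (fun i => F i q)).sum) p := by
      filter_upwards [hFa.eventually_diff le_rfl, hCt.eventually_diff le_rfl] with p d1 d2
      exact lambda_add j d1 d2
    simp only [List.map_cons, List.sum_cons]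
    refine key.trans ?_
    filter_upwards [ih hFt] with p hp
    rw [hp]

end words


section leibniz

/-- the set of ways to split a word in two (ordered) subwords -/
def splits {α : Type*} : List α → List (List α × List α)
  | [] => [([], [])]
  | a :: t => (splits t).flatMap fun q => [(a :: q.1, q.2), (q.1, a :: q.2)]

lemma mem_splits {α : Type*} : ∀ {w : List α} {q : List α × List α},
    q ∈ splits w → q.1.Sublist w ∧ q.2.Sublist w
  | [], q, hq => by
    simp only [splits, List.mem_singleton] at hq
    subst hq; exact ⟨List.Sublist.refl _, List.Sublist.refl _⟩
  | a :: t, q, hq => by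
    simp only [splits, List.mem_flatMap] at hq
    obtain ⟨q', hq', hmem⟩ := hq
    obtain ⟨h1, h2⟩ := mem_splits hq'
    simp only [List.mem_cons, List.mem_singleton, List.not_mem_nil, or_false] at hmem
    rcases hmem with rfl | rfl
    · exact ⟨h1.cons₂ a, h2.cons a⟩
    · exact ⟨h1.cons a, h2.cons₂ a⟩

lemma eventually_list {α ι : Type*} {l : Filter α} (L : List ι) (P : ι → α → Prop)
    (h : ∀ i ∈ L, ∀ᶠ p in l, P i p) : ∀ᶠ p in l, ∀ i ∈ L, P i p := by
  induction L with
  | nil => simp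
  | cons a t ih =>
    filter_upwards [h a (by simp), ih fun i hi => h i (by simp [hi])] with p h1 h2
    intro i hi
    rcases List.mem_cons.1 hi with rfl | hi
    · exact h1
    · exact h2 i hi

lemma sum_map_flatMap {α β γ : Type*} [AddCommMonoid γ] (L : List α) (f : α → List β)
    (g : β → γ) : ((L.flatMap f).map g).sum = (L.map (fun a => ((f a).map g).sum)).sum := by
  induction L with
  | nil => simp
  | cons a t ih => simp [List.flatMap_cons, ih]

variable {V₀ : Set (Dom n d)}

lemma lw_mul (hV₀ : IsOpen V₀) (h0V₀ : (0 : Dom n d) ∈ V₀)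
    (hA : ∀ j l, ContDiffOn ℝ (⊤ : ℕ∞) (Acoef φ j l) V₀)
    {m : ℕ} {c g : Dom n d → ℂ} (hc : Csm m c) (hg : Csm m g) :
    ∀ w : List (Fin n), w.length ≤ m →
      LW φ w (fun p => c p * g p) =ᶠ[𝓝 (0 : Dom n d)]
        fun p => ((splits w).map (fun q => LW φ q.1 c p * LW φ q.2 g p)).sum
  | [], _ => by simp [splits]
  | j :: t, hw => by
    have ht : t.length ≤ m := le_trans (by simp) hw
    have ht1 : t.length + 1 ≤ m := by simpa using hw
    -- Csm facts for the pieces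
    have hq1 : ∀ q ∈ splits t, Csm 1 (LW φ q.1 c) := by
      intro q hq
      have hlen : q.1.length ≤ t.length := (mem_splits hq).1.length_le
      exact (hc.lw hV₀ h0V₀ hA q.1 (le_trans hlen ht)).mono (by omega)
    have hq2 : ∀ q ∈ splits t, Csm 1 (LW φ q.2 g) := by
      intro q hq
      have hlen : q.2.length ≤ t.length := (mem_splits hq).2.length_le
      exact (hg.lw hV₀ h0V₀ hA q.2 (le_trans hlen ht)).mono (by omega)
    have hF : ∀ q ∈ splits t, Csm 1 (fun p => LW φ q.1 c p * LW φ q.2 g p) :=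
      fun q hq => (hq1 q hq).mul (hq2 q hq)
    -- step 1 : push ᶠeq through Λⱼ
    have step1 : LW φ (j :: t) (fun p => c p * g p) =ᶠ[𝓝 (0 : Dom n d)]
        Lambda φ j (fun p => ((splits t).map
          (fun q => LW φ q.1 c p * LW φ q.2 g p)).sum) := by
      rw [LW_cons]
      exact EventuallyEq.lambda (lw_mul hV₀ h0V₀ hA hc hg t ht) j
    -- step 2 : Λⱼ of the finite sum
    have step2 := lambda_list_sum (φ := φ) (splits t)
      (fun q => fun p => LW φ q.1 c p * LW φ q.2 g p) hF j
    -- step 3 : Leibniz in each term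
    have hdiff : ∀ᶠ p in 𝓝 (0 : Dom n d), ∀ q ∈ splits t,
        DifferentiableAt ℝ (LW φ q.1 c) p ∧ DifferentiableAt ℝ (LW φ q.2 g) p := by
      apply eventually_list
      intro q hq
      filter_upwards [(hq1 q hq).eventually_diff le_rfl,
        (hq2 q hq).eventually_diff le_rfl] with p h1 h2 using ⟨h1, h2⟩
    have step3 : (fun p => ((splits t).map
          (fun q => Lambda φ j (fun r => LW φ q.1 c r * LW φ q.2 g r) p)).sum)
        =ᶠ[𝓝 (0 : Dom n d)] fun p => ((splits t).map
          (fun q => LW φ (j :: q.1) c p * LW φ q.2 g p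
            + LW φ q.1 c p * LW φ (j :: q.2) g p)).sum := by
      filter_upwards [hdiff] with p hp
      congr 1
      apply List.map_congr_left
      intro q hq
      obtain ⟨d1, d2⟩ := hp q hq
      rw [lambda_mul j d1 d2, LW_cons, LW_cons]
      ring
    refine (step1.trans (step2.trans step3)).trans ?_
    apply Filter.Eventually.of_forall
    intro p
    show _ = (List.map _ ((splits t).flatMap fun q => [(j :: q.1, q.2), (q.1, j :: q.2)])).sum
    rw [sum_map_flatMap]
    simp

end leibniz


section wordof

variable (φ)

def wordOf (α : Fin n → ℕ) : List (Fin n) :=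
  (List.finRange n).flatMap fun j => List.replicate (α j) j

lemma LW_replicate (j : Fin n) (m : ℕ) (f : Dom n d → ℂ) :
    LW φ (List.replicate m j) f = (Lambda φ j)^[m] f := by
  induction m with
  | zero => rfl
  | succ m ih =>
    rw [List.replicate_succ, LW_cons, ih, Function.iterate_succ_apply']

lemma length_wordOf (α : Fin n → ℕ) : (wordOf α).length = ∑ j, α j := by
  rw [wordOf, List.length_flatMap, Fin.sum_univ_def]
  congr 1
  simp [Function.comp_def]

lemma count_flatMap_replicate_of_not_mem {α' : Type*} [DecidableEq α'] (β : α' → ℕ)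
    (j : α') : ∀ (L : List α'), j ∉ L →
      ((L.flatMap fun i => List.replicate (β i) i).count j) = 0 := by
  intro L hL
  rw [List.count_eq_zero]
  intro hmem
  obtain ⟨i, hi, hmem'⟩ := List.mem_flatMap.1 hmem
  exact hL (by rwa [List.eq_of_mem_replicate hmem'])

lemma count_flatMap_replicate {α' : Type*} [DecidableEq α'] (β : α' → ℕ) (j : α') :
    ∀ (L : List α'), L.Nodup → j ∈ L →
      ((L.flatMap fun i => List.replicate (β i) i).count j) = β j
  | [], _, hj => by simp at hj
  | i :: t, hnd, hj => by
    rw [List.flatMap_cons, List.count_append]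
    rcases List.mem_cons.1 hj with rfl | hj'
    · rw [List.count_replicate, if_pos (by simp),
        count_flatMap_replicate_of_not_mem β _ t (List.nodup_cons.1 hnd).1, add_zero]
    · have hne : i ≠ j := fun h => (List.nodup_cons.1 hnd).1 (h ▸ hj')
      rw [List.count_replicate, if_neg (by simpa using hne), zero_add,
        count_flatMap_replicate β j t (List.nodup_cons.1 hnd).2 hj']

lemma count_wordOf (α : Fin n → ℕ) (j : Fin n) : (wordOf α).count j = α j :=
  count_flatMap_replicate α j (List.finRange n) (List.nodup_finRange n) (List.mem_finRange j)

lemma pairwise_flatMap_replicate {α' : Type*} [Preorder α'] (β : α' → ℕ) :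
    ∀ (L : List α'), L.Pairwise (· < ·) →
      ((L.flatMap fun i => List.replicate (β i) i).Pairwise (· ≤ ·))
  | [], _ => by simp
  | i :: t, hp => by
    obtain ⟨hlt, hpt⟩ := List.pairwise_cons.1 hp
    rw [List.flatMap_cons, List.pairwise_append]
    refine ⟨List.pairwise_replicate.2 (Or.inr le_rfl), pairwise_flatMap_replicate β t hpt, ?_⟩
    intro a ha b hb
    obtain ⟨i', hi', hb'⟩ := List.mem_flatMap.1 hb
    rw [List.eq_of_mem_replicate ha, List.eq_of_mem_replicate hb']
    exact (hlt i' hi').le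

lemma sorted_wordOf (α : Fin n → ℕ) : (wordOf α).Pairwise (· ≤ ·) :=
  pairwise_flatMap_replicate α (List.finRange n) (List.pairwise_lt_finRange n)

lemma sorted_eq_wordOf {u : List (Fin n)} (hu : u.Pairwise (· ≤ ·)) :
    u = wordOf (fun j => u.count j) := by
  apply List.Perm.eq_of_pairwise' (r := (· ≤ ·)) hu (sorted_wordOf _)
  rw [List.perm_iff_count]
  intro a
  rw [count_wordOf]

variable {φ}

lemma LambdaPow_eq_LW (α : Fin n → ℕ) (f : Dom n d → ℂ) :
    LambdaPow φ α f = LW φ (wordOf α) f := by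
  suffices h : ∀ L : List (Fin n),
      ((L.map fun j => (Lambda φ j)^[α j]).foldr (· ∘ ·) id) f
        = LW φ (L.flatMap fun j => List.replicate (α j) j) f from h (List.finRange n)
  intro L
  induction L with
  | nil => rfl
  | cons j t ih =>
    rw [List.map_cons, List.foldr_cons, List.flatMap_cons, LW_append, LW_replicate]
    exact congrArg _ ih

end wordof


section master

variable {V₀ : Set (Dom n d)}

lemma lambda_finset_sum {ι : Type*} (t : Finset ι) (F : ι → Dom n d → ℂ)
    (hF : ∀ i ∈ t, Csm 1 (F i)) (j : Fin n) :
    Lambda φ j (fun p => ∑ i ∈ t, F i p) =ᶠ[𝓝 (0 : Dom n d)]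
      fun p => ∑ i ∈ t, Lambda φ j (F i) p := by
  classical
  induction t using Finset.induction with
  | empty => simp only [Finset.sum_empty]; rw [lambda_zero]
  | insert a s hnotmem ih =>
    have hFa : Csm 1 (F a) := hF a (Finset.mem_insert_self a s)
    have hFs : ∀ i ∈ s, Csm 1 (F i) := fun i hi => hF i (Finset.mem_insert_of_mem hi)
    have hCs : Csm 1 (fun p => ∑ i ∈ s, F i p) := Csm.sum hFs
    have key : Lambda φ j (fun p => F a p + ∑ i ∈ s, F i p) =ᶠ[𝓝 (0 : Dom n d)]
        fun p => Lambda φ j (F a) p + Lambda φ j (fun q => ∑ i ∈ s, F i q) p := by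
      filter_upwards [hFa.eventually_diff le_rfl, hCs.eventually_diff le_rfl] with p d1 d2
      exact lambda_add j d1 d2
    simp only [Finset.sum_insert hnotmem]
    refine key.trans ?_
    filter_upwards [ih hFs] with p hp
    rw [hp]

lemma lw_sum (hV₀ : IsOpen V₀) (h0V₀ : (0 : Dom n d) ∈ V₀)
    (hA : ∀ j l, ContDiffOn ℝ (⊤ : ℕ∞) (Acoef φ j l) V₀)
    {ι : Type*} (t : Finset ι) (F : ι → Dom n d → ℂ) {m : ℕ}
    (hF : ∀ i ∈ t, Csm m (F i)) :
    ∀ w : List (Fin n), w.length ≤ m →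
      LW φ w (fun p => ∑ i ∈ t, F i p) =ᶠ[𝓝 (0 : Dom n d)]
        fun p => ∑ i ∈ t, LW φ w (F i) p
  | [], _ => by simp
  | j :: t', hw => by
    have ht' : t'.length ≤ m := le_trans (by simp) hw
    have ih := lw_sum hV₀ h0V₀ hA t F hF t' ht'
    have h1 : ∀ i ∈ t, Csm 1 (LW φ t' (F i)) := by
      intro i hi
      exact ((hF i hi).lw hV₀ h0V₀ hA t' ht').mono (by simp at hw; omega)
    rw [LW_cons]
    refine (EventuallyEq.lambda ih j).trans ?_
    exact lambda_finset_sum t (fun i => LW φ t' (F i)) h1 j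

lemma list_comb_mem {N' : ℕ} {ι : Type*} (S : Submodule ℂ (Fin N' → ℂ)) (L : List ι)
    (coef : ι → ℂ) (vec : ι → Fin N' → ℂ) (h : ∀ q ∈ L, vec q ∈ S) :
    (fun m => (L.map (fun q => coef q * vec q m)).sum) ∈ S := by
  induction L with
  | nil => exact (show (fun _ : Fin N' => (0:ℂ)) = 0 from rfl) ▸ S.zero_mem
  | cons a t ih =>
    simp only [List.map_cons, List.sum_cons]
    exact S.add_mem (S.smul_mem (coef a) (h a (by simp))) (ih fun q hq => h q (by simp [hq]))

lemma Ek_le (hV₀ : IsOpen V₀) (h0V₀ : (0 : Dom n d) ∈ V₀)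
    (hA : ∀ j l, ContDiffOn ℝ (⊤ : ℕ∞) (Acoef φ j l) V₀)
    {N' d' k : ℕ} (ρ₁ ρ₂ : Fin d' → (Fin N' → ℂ) → ℝ) (H : Dom n d → Fin N' → ℂ)
    (c : Fin d' → Fin d' → Dom n d → ℂ) (hc : ∀ l ν, Csm k (c l ν))
    (hg : ∀ ν m, Csm k (fun p => gradZ m (ρ₂ ν) (H p)))
    (hid : ∀ l m, (fun p => gradZ m (ρ₁ l) (H p)) =ᶠ[𝓝 (0 : Dom n d)]
      fun p => ∑ ν, c l ν p * gradZ m (ρ₂ ν) (H p)) :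
    Ek φ ρ₁ H k ≤ Ek φ ρ₂ H k := by
  rw [Ek, Submodule.span_le]
  rintro v ⟨α, l, hα, rfl⟩
  set w := wordOf α with hw
  have hwlen : w.length ≤ k := by rw [hw, length_wordOf]; exact hα
  have hv : ∀ m : Fin N', LambdaPow φ α (fun p => gradZ m (ρ₁ l) (H p)) 0
      = ∑ ν, ((splits w).map (fun q => LW φ q.1 (c l ν) 0
          * LW φ q.2 (fun p => gradZ m (ρ₂ ν) (H p)) 0)).sum := by
    intro m
    have hcg : ∀ ν ∈ (Finset.univ : Finset (Fin d')),
        Csm k (fun p => c l ν p * gradZ m (ρ₂ ν) (H p)) :=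
      fun ν _ => (hc l ν).mul (hg ν m)
    have e1 : LW φ w (fun p => gradZ m (ρ₁ l) (H p)) =ᶠ[𝓝 (0 : Dom n d)]
        LW φ w (fun p => ∑ ν, c l ν p * gradZ m (ρ₂ ν) (H p)) :=
      EventuallyEq.lw (hid l m) w
    have e2 := lw_sum hV₀ h0V₀ hA Finset.univ
      (fun ν => fun p => c l ν p * gradZ m (ρ₂ ν) (H p)) hcg w hwlen
    rw [LambdaPow_eq_LW, ← hw, (e1.trans e2).eq_of_nhds]
    refine Finset.sum_congr rfl fun ν _ => ?_
    exact (lw_mul hV₀ h0V₀ hA (hc l ν) (hg ν m) w hwlen).eq_of_nhds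
  have hrw : (fun m => LambdaPow φ α (fun p => gradZ m (ρ₁ l) (H p)) 0)
      = ∑ ν : Fin d', (fun m => ((splits w).map (fun q => LW φ q.1 (c l ν) 0
          * LW φ q.2 (fun p => gradZ m (ρ₂ ν) (H p)) 0)).sum) := by
    funext m
    rw [hv m, Finset.sum_apply]
  rw [hrw]
  refine Submodule.sum_mem _ fun ν _ => ?_
  refine list_comb_mem _ (splits w) (fun q => LW φ q.1 (c l ν) 0)
    (fun q => fun m => LW φ q.2 (fun p => gradZ m (ρ₂ ν) (H p)) 0) ?_
  intro q hq
  have hsort : q.2.Pairwise (· ≤ ·) := List.Pairwise.sublist (mem_splits hq).2 (sorted_wordOf α)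
  have hq2 : q.2 = wordOf (fun j => q.2.count j) := sorted_eq_wordOf hsort
  have hβ : (∑ j, q.2.count j) ≤ k := by
    rw [← length_wordOf, ← hq2]
    exact le_trans (mem_splits hq).2.length_le hwlen
  apply Submodule.subset_span
  refine ⟨fun j => q.2.count j, ν, hβ, ?_⟩
  funext m
  rw [LambdaPow_eq_LW, ← hq2]

end master


section analytic

lemma contDiffOn_fderiv_apply' {E F : Type*} [NormedAddCommGroup E] [NormedSpace ℝ E]
    [NormedAddCommGroup F] [NormedSpace ℝ F] {f : E → F} {V : Set E} {m nn : WithTop ℕ∞}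
    (hf : ContDiffOn ℝ nn f V) (hV : IsOpen V) (hm : m + 1 ≤ nn) (v : E) :
    ContDiffOn ℝ m (fun p => fderiv ℝ f p v) V :=
  (hf.fderiv_of_isOpen hV hm).clm_apply contDiffOn_const

lemma infty_add_one : ((⊤ : ℕ∞) : WithTop ℕ∞) + 1 ≤ ((⊤ : ℕ∞) : WithTop ℕ∞) := by
  have : ((⊤ : ℕ∞) : WithTop ℕ∞) + 1 = ((⊤ : ℕ∞) : WithTop ℕ∞) := by
    rw [show ((1 : WithTop ℕ∞)) = (((1 : ℕ∞)) : WithTop ℕ∞) from rfl, ← WithTop.coe_add]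
    norm_num
  exact this.le

variable {E : Type*} [NormedAddCommGroup E] [NormedSpace ℝ E]

lemma contDiffOn_finset_prod {𝔸 ι : Type*} [NormedCommRing 𝔸] [NormedAlgebra ℝ 𝔸]
    {nn : WithTop ℕ∞} {V : Set E} (t : Finset ι) (f : ι → E → 𝔸)
    (h : ∀ i ∈ t, ContDiffOn ℝ nn (f i) V) :
    ContDiffOn ℝ nn (fun p => ∏ i ∈ t, f i p) V := by
  classical
  induction t using Finset.induction with
  | empty => simpa using contDiffOn_const
  | insert a s hnm ih =>
    simp only [Finset.prod_insert hnm]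
    exact (h a (Finset.mem_insert_self a s)).mul (ih fun i hi => h i (Finset.mem_insert_of_mem hi))

lemma contDiffOn_det {𝔸 : Type*} [NormedCommRing 𝔸] [NormedAlgebra ℝ 𝔸] {q : ℕ}
    {nn : WithTop ℕ∞} {V : Set E} {M : E → Matrix (Fin q) (Fin q) 𝔸}
    (h : ∀ i j, ContDiffOn ℝ nn (fun p => M p i j) V) :
    ContDiffOn ℝ nn (fun p => (M p).det) V := by
  have : (fun p => (M p).det)
      = fun p => ∑ σ : Equiv.Perm (Fin q), (Equiv.Perm.sign σ : ℤ) • ∏ i, M p (σ i) i := by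
    funext p
    rw [Matrix.det_apply]
    exact Finset.sum_congr rfl fun σ _ => by rw [Units.smul_def]
  rw [this]
  refine ContDiffOn.sum fun σ _ => ?_
  refine ContDiffOn.const_smul _ ?_
  exact contDiffOn_finset_prod _ _ fun i _ => h (σ i) i

lemma contDiffOn_adjugate {𝔸 : Type*} [NormedCommRing 𝔸] [NormedAlgebra ℝ 𝔸] {q : ℕ}
    {nn : WithTop ℕ∞} {V : Set E} {M : E → Matrix (Fin q) (Fin q) 𝔸}
    (h : ∀ i j, ContDiffOn ℝ nn (fun p => M p i j) V) (i j : Fin q) :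
    ContDiffOn ℝ nn (fun p => (M p).adjugate i j) V := by
  have hrw : (fun p => (M p).adjugate i j)
      = fun p => ((M p).updateRow j (Pi.single i 1)).det := by
    funext p
    rw [Matrix.adjugate_apply]
  rw [hrw]
  refine contDiffOn_det fun i' j' => ?_
  by_cases hc : i' = j
  · have hh : (fun p => (M p).updateRow j (Pi.single i 1) i' j')
        = fun _ => (Pi.single i 1 : Fin q → 𝔸) j' :=
      funext fun p => by rw [Matrix.updateRow_apply, if_pos hc]
    rw [hh]; exact contDiffOn_const
  · have hh : (fun p => (M p).updateRow j (Pi.single i 1) i' j') = fun p => M p i' j' :=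
      funext fun p => by rw [Matrix.updateRow_apply, if_neg hc]
    rw [hh]; exact h i' j'

lemma contDiffOn_matrix_inv {𝔸 : Type*} [NormedField 𝔸] [NormedAlgebra ℝ 𝔸] {q : ℕ}
    {nn : WithTop ℕ∞} {V : Set E} {M : E → Matrix (Fin q) (Fin q) 𝔸}
    (h : ∀ i j, ContDiffOn ℝ nn (fun p => M p i j) V)
    (hdet : ∀ p ∈ V, (M p).det ≠ 0) (i j : Fin q) :
    ContDiffOn ℝ nn (fun p => (M p)⁻¹ i j) V := by
  have hrw : (fun p => (M p)⁻¹ i j) = fun p => ((M p).det)⁻¹ * (M p).adjugate i j := by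
    funext p
    rw [Matrix.inv_def, Matrix.smul_apply, Ring.inverse_eq_inv, smul_eq_mul]
  rw [hrw]
  refine ContDiffOn.mul (fun p hp => ((contDiffOn_det h p hp).inv (hdet p hp))) ?_
  exact contDiffOn_adjugate h i j

end analytic


section assembly

lemma exists_acoef_smooth (hφan : ∀ᶠ p in 𝓝 (0 : Dom n d), AnalyticAt ℝ φ p)
    (hdφ0 : fderiv ℝ φ 0 = 0) :
    ∃ V₀ : Set (Dom n d), IsOpen V₀ ∧ (0 : Dom n d) ∈ V₀ ∧
      ∀ j l, ContDiffOn ℝ (⊤ : ℕ∞) (Acoef φ j l) V₀ := by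
  obtain ⟨V1, hsub, hV1o, h0V1⟩ := mem_nhds_iff.1 hφan
  have hφC : ContDiffOn ℝ (⊤ : ℕ∞) φ V1 := fun p hp => ((hsub hp).contDiffAt).contDiffWithinAt
  have hMat : ∀ k l, ContDiffOn ℝ (⊤ : ℕ∞) (fun p => phiMat φ p k l) V1 := by
    intro k l
    have h1 : ContDiffOn ℝ (⊤ : ℕ∞) (fun p => fderiv ℝ φ p (0, Pi.single l 1)) V1 :=
      contDiffOn_fderiv_apply' hφC hV1o infty_add_one _
    have h2 : ContDiffOn ℝ (⊤ : ℕ∞)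
        (fun p => ((fderiv ℝ φ p (0, Pi.single l 1)) k : ℂ)) V1 :=
      Complex.ofRealCLM.contDiff.comp_contDiffOn (contDiffOn_pi.1 h1 k)
    exact contDiffOn_const.add (contDiffOn_const.mul h2)
  have hdz : ∀ (j : Fin n) (k : Fin d),
      ContDiffOn ℝ (⊤ : ℕ∞) (dzbar j (fun q => ((φ q k : ℝ) : ℂ))) V1 := by
    intro j k
    have hφk : ContDiffOn ℝ (⊤ : ℕ∞) (fun q => ((φ q k : ℝ) : ℂ)) V1 :=
      Complex.ofRealCLM.contDiff.comp_contDiffOn (contDiffOn_pi.1 hφC k)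
    have h1 := contDiffOn_fderiv_apply' hφk hV1o infty_add_one (Pi.single j 1, 0)
    have h2 := contDiffOn_fderiv_apply' hφk hV1o infty_add_one (Pi.single j Complex.I, 0)
    exact contDiffOn_const.mul (h1.add (contDiffOn_const.mul h2))
  have hdetC : ContinuousOn (fun p => (phiMat φ p).det) V1 :=
    (contDiffOn_det hMat).continuousOn
  have hdet0 : (phiMat φ 0).det = 1 := by
    have h1 : phiMat φ 0 = 1 := by
      funext k l
      simp [phiMat, hdφ0, Matrix.one_apply]
    rw [h1, Matrix.det_one]
  refine ⟨V1 ∩ (fun p => (phiMat φ p).det) ⁻¹' {0}ᶜ,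
    hdetC.isOpen_inter_preimage hV1o isOpen_compl_singleton,
    ⟨h0V1, by simp [hdet0]⟩, ?_⟩
  intro j l
  show ContDiffOn ℝ (⊤ : ℕ∞)
    (fun p => ∑ k, dzbar j (fun q => ((φ q k : ℝ) : ℂ)) p * (phiMat φ p)⁻¹ k l) _
  refine ContDiffOn.sum fun k _ => ContDiffOn.mul ((hdz j k).mono Set.inter_subset_left) ?_
  refine contDiffOn_matrix_inv (fun i j' => (hMat i j').mono Set.inter_subset_left) ?_ k l
  intro p hp
  simpa using hp.2

lemma gradZ_smooth {N' : ℕ} {r : (Fin N' → ℂ) → ℝ} {V : Set (Fin N' → ℂ)} (hV : IsOpen V)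
    (hr : ContDiffOn ℝ (⊤ : ℕ∞) r V) (m : Fin N') :
    ContDiffOn ℝ (⊤ : ℕ∞) (gradZ m r) V := by
  have h1 := Complex.ofRealCLM.contDiff.comp_contDiffOn
    (contDiffOn_fderiv_apply' hr hV infty_add_one (Pi.single m 1))
  have h2 := Complex.ofRealCLM.contDiff.comp_contDiffOn
    (contDiffOn_fderiv_apply' hr hV infty_add_one (Pi.single m Complex.I))
  exact contDiffOn_const.mul (h1.sub (contDiffOn_const.mul h2))

lemma csm_comp {N' k : ℕ} {G : (Fin N' → ℂ) → ℂ} {V : Set (Fin N' → ℂ)}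
    (hVo : IsOpen V) (hG : ContDiffOn ℝ (⊤ : ℕ∞) G V)
    {H : Dom n d → Fin N' → ℂ} {U : Set (Dom n d)} (hU : IsOpen U)
    (h0U : (0 : Dom n d) ∈ U) (hH : ContDiffOn ℝ k H U) (hH0 : H 0 = 0)
    (h0V : (0 : Fin N' → ℂ) ∈ V) : Csm k (fun p => G (H p)) := by
  refine ⟨U ∩ H ⁻¹' V, hH.continuousOn.isOpen_inter_preimage hU hVo,
    ⟨h0U, by simp [Set.mem_preimage, hH0, h0V]⟩, ?_⟩
  exact ContDiffOn.comp
    (hG.of_le (by exact_mod_cast le_top : (k : WithTop ℕ∞) ≤ ((⊤:ℕ∞) : WithTop ℕ∞)))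
    (hH.mono Set.inter_subset_left) (fun p hp => hp.2)

lemma grad_sum_mul {N' d' : ℕ} (ρ : Fin d' → (Fin N' → ℂ) → ℝ)
    (a : (Fin N' → ℂ) → Matrix (Fin d') (Fin d') ℝ) (l : Fin d') (m : Fin N')
    (Z : Fin N' → ℂ) (hρd : ∀ ν, DifferentiableAt ℝ (ρ ν) Z)
    (had : ∀ ν μ, DifferentiableAt ℝ (fun W => a W ν μ) Z) (hρ0 : ∀ ν, ρ ν Z = 0) :
    gradZ m (fun W => ∑ ν, a W l ν * ρ ν W) Z = ∑ ν, (a Z l ν : ℂ) * gradZ m (ρ ν) Z := by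
  have hterm : ∀ ν ∈ (Finset.univ : Finset (Fin d')),
      HasFDerivAt (fun W => a W l ν * ρ ν W) (a Z l ν • fderiv ℝ (ρ ν) Z) Z := by
    intro ν _
    have h := ((had l ν).hasFDerivAt.fun_mul (hρd ν).hasFDerivAt)
    simpa [hρ0 ν] using h
  have hD : HasFDerivAt (fun W => ∑ ν, a W l ν * ρ ν W)
      (∑ ν, a Z l ν • fderiv ℝ (ρ ν) Z) Z := HasFDerivAt.fun_sum hterm
  unfold gradZ
  rw [hD.fderiv]
  simp only [ContinuousLinearMap.sum_apply, ContinuousLinearMap.coe_smul', Pi.smul_apply,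
    smul_eq_mul]
  push_cast
  rw [Finset.mul_sum, ← Finset.sum_sub_distrib, Finset.mul_sum]
  refine Finset.sum_congr rfl fun ν _ => by ring

end assembly


end CRproof

open CRproof

/-- the spaces `E_k(0)` do not depend on the choice of defining function:
replacing `ρ'` by `ρ̃ = a·ρ'` with `a` a real-analytic invertible-matrix-valued function
leaves `E_k(0)` unchanged. -/
theorem Ek_indep_defining_function {n d N' d' k : ℕ} (hn : 1 ≤ n) (hd : 1 ≤ d) (hd' : 1 ≤ d')
    -- the source manifold M, in normal form
    (φ : Dom n d → Fin d → ℝ)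
    (hφan : ∀ᶠ p in 𝓝 (0 : Dom n d), AnalyticAt ℝ φ p)
    (hφ0 : φ 0 = 0) (hdφ0 : fderiv ℝ φ 0 = 0)
    -- the target manifold M', generic through 0
    (ρ : Fin d' → (Fin N' → ℂ) → ℝ)
    (hρan : ∀ l, ∀ᶠ Z in 𝓝 (0 : Fin N' → ℂ), AnalyticAt ℝ (ρ l) Z)
    (hρ0 : ∀ l, ρ l 0 = 0)
    (hρind : LinearIndependent ℂ fun l : Fin d' => fun m => gradZ m (ρ l) 0)
    -- the CR map H : M → M' of class C^k
    (H : Dom n d → Fin N' → ℂ) (U : Set (Dom n d)) (hU : IsOpen U) (h0U : (0 : Dom n d) ∈ U)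
    (hHsm : ContDiffOn ℝ k H U) (hH0 : H 0 = 0)
    (hHCR : ∀ p ∈ U, ∀ j m, Lambda φ j (fun q => H q m) p = 0)
    (hHM' : ∀ p ∈ U, ∀ l, ρ l (H p) = 0)
    -- a real-analytic map into the invertible d'×d' real matrices
    (a : (Fin N' → ℂ) → Matrix (Fin d') (Fin d') ℝ)
    (haan : ∀ l m, ∀ᶠ Z in 𝓝 (0 : Fin N' → ℂ), AnalyticAt ℝ (fun Z' => a Z' l m) Z)
    (hainv : ∀ᶠ Z in 𝓝 (0 : Fin N' → ℂ), IsUnit (a Z)) :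
    -- conclusion: ρ̃ = a·ρ' defines the same spaces E_k(0)
    Ek φ (fun l Z => ∑ m, a Z l m * ρ m Z) H k = Ek φ ρ H k := by
  classical
  obtain ⟨V₀, hV₀o, h0V₀, hA⟩ := exists_acoef_smooth hφan hdφ0
  have hone : ((1 : ℕ) : WithTop ℕ∞) ≤ ((⊤ : ℕ∞) : WithTop ℕ∞) := by exact_mod_cast le_top
  have haan' : ∀ᶠ Z in 𝓝 (0 : Fin N' → ℂ), ∀ lm : Fin d' × Fin d',
      AnalyticAt ℝ (fun W => a W lm.1 lm.2) Z :=
    eventually_all.2 fun lm => haan lm.1 lm.2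
  have hρan' : ∀ᶠ Z in 𝓝 (0 : Fin N' → ℂ), ∀ l, AnalyticAt ℝ (ρ l) Z :=
    eventually_all.2 hρan
  obtain ⟨W, hWsub, hWo, h0W⟩ := mem_nhds_iff.1 (haan'.and (hρan'.and hainv))
  have haC : ∀ l ν, ContDiffOn ℝ (⊤ : ℕ∞) (fun Z => a Z l ν) W :=
    fun l ν Z hZ => (((hWsub hZ).1 (l, ν)).contDiffAt).contDiffWithinAt
  have hρC : ∀ l, ContDiffOn ℝ (⊤ : ℕ∞) (ρ l) W :=
    fun l Z hZ => (((hWsub hZ).2.1 l).contDiffAt).contDiffWithinAt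
  have hdet : ∀ Z ∈ W, (a Z).det ≠ 0 := fun Z hZ =>
    isUnit_iff_ne_zero.1 ((Matrix.isUnit_iff_isUnit_det _).1 (hWsub hZ).2.2)
  have hbC : ∀ l ν, ContDiffOn ℝ (⊤ : ℕ∞) (fun Z => (a Z)⁻¹ l ν) W :=
    fun l ν => contDiffOn_matrix_inv (fun i j => haC i j) hdet l ν
  set ρt := fun l (Z : Fin N' → ℂ) => ∑ m, a Z l m * ρ m Z with hρtdef
  have hρtC : ∀ l, ContDiffOn ℝ (⊤ : ℕ∞) (ρt l) W :=
    fun l => ContDiffOn.sum fun μ _ => (haC l μ).mul (hρC μ)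
  have hg2 : ∀ ν m, Csm k (fun p => gradZ m (ρ ν) (H p)) :=
    fun ν m => csm_comp hWo (gradZ_smooth hWo (hρC ν) m) hU h0U hHsm hH0 h0W
  have hgt : ∀ ν m, Csm k (fun p => gradZ m (ρt ν) (H p)) :=
    fun ν m => csm_comp hWo (gradZ_smooth hWo (hρtC ν) m) hU h0U hHsm hH0 h0W
  have hc1 : ∀ l ν, Csm k (fun p => ((a (H p) l ν : ℝ) : ℂ)) :=
    fun l ν => csm_comp hWo
      (Complex.ofRealCLM.contDiff.comp_contDiffOn (haC l ν)) hU h0U hHsm hH0 h0W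
  have hc2 : ∀ l ν, Csm k (fun p => (((a (H p))⁻¹ l ν : ℝ) : ℂ)) :=
    fun l ν => csm_comp hWo
      (Complex.ofRealCLM.contDiff.comp_contDiffOn (hbC l ν)) hU h0U hHsm hH0 h0W
  have hHW : ∀ᶠ p in 𝓝 (0 : Dom n d), H p ∈ W := by
    have hHct : ContinuousAt H 0 := hHsm.continuousOn.continuousAt (hU.mem_nhds h0U)
    exact hHct.preimage_mem_nhds (by rw [hH0]; exact hWo.mem_nhds h0W)
  have hUev : ∀ᶠ p in 𝓝 (0 : Dom n d), p ∈ U := hU.mem_nhds h0U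
  have hρdiff : ∀ {Z}, Z ∈ W → ∀ ν, DifferentiableAt ℝ (ρ ν) Z := fun {Z} hZ ν =>
    (((hρC ν).differentiableOn (by simp)).differentiableAt (hWo.mem_nhds hZ))
  have hadiff : ∀ {Z}, Z ∈ W → ∀ ν μ, DifferentiableAt ℝ (fun X => a X ν μ) Z := fun {Z} hZ ν μ =>
    (((haC ν μ).differentiableOn (by simp)).differentiableAt (hWo.mem_nhds hZ))
  have hstar : ∀ l m, (fun p => gradZ m (ρt l) (H p)) =ᶠ[𝓝 (0 : Dom n d)]
      fun p => ∑ ν, ((a (H p) l ν : ℝ) : ℂ) * gradZ m (ρ ν) (H p) := by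
    intro l m
    filter_upwards [hHW, hUev] with p hpW hpU
    exact grad_sum_mul ρ a l m (H p) (hρdiff hpW) (hadiff hpW) (fun ν => hHM' p hpU ν)
  have dir1 : Ek φ ρt H k ≤ Ek φ ρ H k :=
    Ek_le hV₀o h0V₀ hA ρt ρ H (fun l ν p => ((a (H p) l ν : ℝ) : ℂ)) hc1 hg2 hstar
  have hinv_ev : ∀ᶠ p in 𝓝 (0 : Dom n d), ∀ l μ : Fin d',
      (∑ ν, (a (H p))⁻¹ l ν * a (H p) ν μ) = if l = μ then (1:ℝ) else 0 := by
    filter_upwards [hHW] with p hpW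
    intro l μ
    have hu := Matrix.nonsing_inv_mul (a (H p))
      ((Matrix.isUnit_iff_isUnit_det _).1 (hWsub hpW).2.2)
    have : ((a (H p))⁻¹ * a (H p)) l μ = (1 : Matrix (Fin d') (Fin d') ℝ) l μ := by rw [hu]
    rw [Matrix.mul_apply] at this
    rw [this, Matrix.one_apply]
  have hstar2 : ∀ l m, (fun p => gradZ m (ρ l) (H p)) =ᶠ[𝓝 (0 : Dom n d)]
      fun p => ∑ ν, (((a (H p))⁻¹ l ν : ℝ) : ℂ) * gradZ m (ρt ν) (H p) := by
    intro l m
    filter_upwards [hHW, hUev, hinv_ev] with p hpW hpU hinv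
    have hsm : ∀ ν, gradZ m (ρt ν) (H p) = ∑ μ, ((a (H p) ν μ : ℝ) : ℂ) * gradZ m (ρ μ) (H p) :=
      fun ν => grad_sum_mul ρ a ν m (H p) (hρdiff hpW) (hadiff hpW) (fun ν' => hHM' p hpU ν')
    have key : ∑ ν, (((a (H p))⁻¹ l ν : ℝ) : ℂ) * gradZ m (ρt ν) (H p)
        = ∑ μ, (((if l = μ then (1:ℝ) else 0 : ℝ)) : ℂ) * gradZ m (ρ μ) (H p) := by
      rw [Finset.sum_congr rfl fun ν _ => by rw [hsm ν, Finset.mul_sum]]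
      rw [Finset.sum_comm]
      refine Finset.sum_congr rfl fun μ _ => ?_
      have hcast : ∑ ν, (((a (H p))⁻¹ l ν : ℝ) : ℂ) * ((a (H p) ν μ : ℝ) : ℂ)
          = (((if l = μ then (1:ℝ) else 0 : ℝ)) : ℂ) := by
        rw [← hinv l μ]
        push_cast
        rfl
      rw [← hcast, Finset.sum_mul]
      exact Finset.sum_congr rfl fun ν _ => by ring
    rw [key]
    simp [apply_ite (fun x : ℝ => (x : ℂ)), ite_mul]
  have dir2 : Ek φ ρ H k ≤ Ek φ ρt H k :=
    Ek_le hV₀o h0V₀ hA ρ ρt H (fun l ν p => (((a (H p))⁻¹ l ν : ℝ) : ℂ)) hc2 hgt hstar2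
  exact le_antisymm dir1 dir2
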